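/- Let α > 1, θ > 0, 0 < S < T ≤ ∞, set P^{1/(1+α)} = θ√(S^{−α+1} − T^{−α+1}), S' = P^{−1/(1+α)} S, T' = P^{−1/(1+α)} T, and Φ_{S',P}^{T'}(ζ) = ∫_{S'}^{T'} dx/|ζ − P(x^α,0,0)|. If θ S^α √(S^{−α+1} − T^{−α+1}) ≥ 2R for some R ≥ 1, then for every ζ with |ζ| ≤ R, Φ_{S',P}^{T'}(ζ) ≤ 2/(θ²(α−1)) and ∫_{S'}^{T'} dx/(1 + P x^α) ≥ 1/(2θ²(α−1)). -/

import Mathlib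

open MeasureTheory Set

noncomputable section

abbrev E3 := WithLp 2 (ℝ × ℂ)

def axPt (α x : ℝ) : E3 := (WithLp.equiv 2 (ℝ × ℂ)).symm (x ^ α, 0)

/-- `T^e` for an extended real `T`, with the convention `⊤^e = 0` (as for `e < 0`). -/
def epow (T : EReal) (e : ℝ) : ℝ := if T = ⊤ then 0 else T.toReal ^ e

lemma norm_axPt (α x : ℝ) (hx : 0 ≤ x) : ‖axPt α x‖ = x ^ α := by
  have h := WithLp.prod_norm_eq_add (p := 2) (by norm_num) (axPt α x)
  have h1 : (axPt α x).fst = x ^ α := rfl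
  have h2 : (axPt α x).snd = (0 : ℂ) := rfl
  rw [h1, h2] at h
  have hxα : (0:ℝ) ≤ x ^ α := Real.rpow_nonneg hx _
  rw [h]
  norm_num
  rw [← Real.rpow_natCast (x ^ α) 2, ← Real.rpow_mul hxα]
  norm_num

lemma lintA (α a : ℝ) (hα : 1 < α) (ha : 0 < a) :
    ∫⁻ x in Ioi a, ENNReal.ofReal (x ^ (-α)) = ENNReal.ofReal (a ^ (1 - α) / (α - 1)) := by
  rw [← ofReal_integral_eq_lintegral_ofReal (integrableOn_Ioi_rpow_of_lt (by linarith) ha)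
    (by filter_upwards [ae_restrict_mem measurableSet_Ioi] with x hx using
      Real.rpow_nonneg (le_of_lt (ha.trans hx)) _)]
  rw [integral_Ioi_rpow_of_lt (by linarith) ha]
  congr 1
  rw [show -α + 1 = 1 - α by ring]
  rw [div_eq_div_iff (by linarith) (by linarith)]
  ring

lemma lintB (α a b : ℝ) (hα : 1 < α) (ha : 0 < a) (hab : a < b) :
    ∫⁻ x in Ioo a b, ENNReal.ofReal (x ^ (-α)) =
      ENNReal.ofReal ((a ^ (1 - α) - b ^ (1 - α)) / (α - 1)) := by
  rw [← ofReal_integral_eq_lintegral_ofReal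
    (((integrableOn_Ioi_rpow_of_lt (show -α < -1 by linarith) ha).mono_set Ioo_subset_Ioi_self))
    (by filter_upwards [ae_restrict_mem measurableSet_Ioo] with x hx using
      Real.rpow_nonneg (le_of_lt (ha.trans hx.1)) _)]
  rw [← integral_Ioc_eq_integral_Ioo, ← intervalIntegral.integral_of_le hab.le]
  rw [integral_rpow (Or.inr ⟨by intro h; linarith,
    by simp [Set.uIcc_of_le hab.le]; intro h; linarith⟩)]
  congr 1
  rw [show -α + 1 = 1 - α by ring]
  rw [div_eq_div_iff (by linarith) (by linarith)]
  ring

theorem stmt10 (α θ S R P : ℝ) (T : EReal) (hα : 1 < α) (hθ : 0 < θ) (hS : 0 < S)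
    (hST : (S : EReal) < T) (hR : 1 ≤ R) (hP : 0 < P)
    (hPdef : P ^ (1 / (1 + α)) = θ * Real.sqrt (S ^ (1 - α) - epow T (1 - α)))
    (hbig : 2 * R ≤ θ * S ^ α * Real.sqrt (S ^ (1 - α) - epow T (1 - α)))
    (ζ : E3) (hζ : ‖ζ‖ ≤ R) :
    (∫⁻ x in {x : ℝ | P ^ (-(1 / (1 + α))) * S < x ∧
        (x : EReal) < ((P ^ (-(1 / (1 + α))) : ℝ) : EReal) * T},
      ENNReal.ofReal (1 / ‖ζ - P • axPt α x‖)) ≤ ENNReal.ofReal (2 / (θ ^ 2 * (α - 1))) ∧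
    ENNReal.ofReal (1 / (2 * θ ^ 2 * (α - 1))) ≤
      ∫⁻ x in {x : ℝ | P ^ (-(1 / (1 + α))) * S < x ∧
          (x : EReal) < ((P ^ (-(1 / (1 + α))) : ℝ) : EReal) * T},
        ENNReal.ofReal (1 / (1 + P * x ^ α)) := by
  have hα1 : (0:ℝ) < α - 1 := by linarith
  have h1α : (0:ℝ) < 1 + α := by linarith
  set D : ℝ := S ^ (1 - α) - epow T (1 - α) with hDdef
  set c : ℝ := P ^ (-(1 / (1 + α))) with hcdef
  have hc : 0 < c := Real.rpow_pos_of_pos hP _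
  have hQ : 0 < P ^ (1 / (1 + α)) := Real.rpow_pos_of_pos hP _
  have hθD : 0 < θ * Real.sqrt D := hPdef ▸ hQ
  have hsD : 0 < Real.sqrt D := by nlinarith [Real.sqrt_nonneg D]
  have hD : 0 < D := Real.sqrt_pos.mp hsD
  have hQ2 : (P ^ (1 / (1 + α))) ^ 2 = θ ^ 2 * D := by
    rw [hPdef, mul_pow, Real.sq_sqrt hD.le]
  have hcS : 0 < c * S := mul_pos hc hS
  -- the key exponent computation
  have hfrac : c ^ (1 - α) / P = 1 / (θ ^ 2 * D) := by
    have e3 : c ^ (1 - α) = P ^ (-(1 / (1 + α)) * (1 - α)) := by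
      rw [hcdef, ← Real.rpow_mul hP.le]
    have e4 : P ^ (-(1 / (1 + α)) * (1 - α)) / P = P ^ (-(1 / (1 + α)) * (1 - α) - 1) := by
      rw [Real.rpow_sub hP, Real.rpow_one]
    have e5 : -(1 / (1 + α)) * (1 - α) - 1 = (1 / (1 + α)) * (-2) := by
      field_simp; ring
    rw [e3, e4, e5, Real.rpow_mul hP.le, Real.rpow_neg hQ.le,
      show (2:ℝ) = ((2:ℕ):ℝ) by norm_num, Real.rpow_natCast, hQ2, one_div]
  have hc1 : c ^ (1 - α) * (θ ^ 2 * D) = 1 * P :=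
    (div_eq_div_iff hP.ne' (by positivity : θ ^ 2 * D ≠ 0)).mp hfrac
  -- lower bound for P x^α on the set
  have hPxα : ∀ x : ℝ, c * S < x → 2 * R ≤ P * x ^ α ∧ 0 < x := by
    intro x hx
    have hx0 : 0 < x := hcS.trans hx
    have e1 : P * c ^ α = P ^ (1 / (1 + α)) := by
      rw [hcdef, ← Real.rpow_mul hP.le]
      nth_rewrite 1 [show P = P ^ (1:ℝ) from (Real.rpow_one P).symm]
      rw [← Real.rpow_add hP]
      congr 1
      field_simp
      ring
    have e2 : P * (c * S) ^ α = θ * S ^ α * Real.sqrt D := by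
      rw [Real.mul_rpow hc.le hS.le, show P * (c ^ α * S ^ α) = (P * c ^ α) * S ^ α by ring,
        e1, hPdef]
      ring
    have e6 : (c * S) ^ α < x ^ α := Real.rpow_lt_rpow hcS.le hx (by linarith)
    refine ⟨?_, hx0⟩
    calc 2 * R ≤ θ * S ^ α * Real.sqrt D := hbig
      _ = P * (c * S) ^ α := e2.symm
      _ ≤ P * x ^ α := by nlinarith
  -- pointwise bound for part 1
  have pt1 : ∀ x : ℝ, c * S < x →
      ENNReal.ofReal (1 / ‖ζ - P • axPt α x‖) ≤
        ENNReal.ofReal (2 / P) * ENNReal.ofReal (x ^ (-α)) := by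
    intro x hx
    obtain ⟨h2R, hx0⟩ := hPxα x hx
    have hxa : 0 < x ^ α := Real.rpow_pos_of_pos hx0 _
    have hPx : 0 < P * x ^ α := mul_pos hP hxa
    have hnorm : P * x ^ α / 2 ≤ ‖ζ - P • axPt α x‖ := by
      have h1 : ‖P • axPt α x‖ = P * x ^ α := by
        rw [norm_smul, norm_axPt α x hx0.le, Real.norm_of_nonneg hP.le]
      have h2 := norm_sub_norm_le (P • axPt α x) ζ
      rw [norm_sub_rev] at h2
      rw [h1] at h2
      linarith
    rw [← ENNReal.ofReal_mul (by positivity)]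
    apply ENNReal.ofReal_le_ofReal
    have heq : 2 / P * x ^ (-α) = 1 / (P * x ^ α / 2) := by
      rw [Real.rpow_neg hx0.le]
      field_simp
    rw [heq]
    exact one_div_le_one_div_of_le (by linarith) hnorm
  -- pointwise bound for part 2
  have pt2 : ∀ x : ℝ, c * S < x →
      ENNReal.ofReal (1 / (2 * P)) * ENNReal.ofReal (x ^ (-α)) ≤
        ENNReal.ofReal (1 / (1 + P * x ^ α)) := by
    intro x hx
    obtain ⟨h2R, hx0⟩ := hPxα x hx
    have hxa : 0 < x ^ α := Real.rpow_pos_of_pos hx0 _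
    have hPx : 0 < P * x ^ α := mul_pos hP hxa
    have h1 : 1 ≤ P * x ^ α := by linarith
    rw [← ENNReal.ofReal_mul (by positivity)]
    apply ENNReal.ofReal_le_ofReal
    have heq : 1 / (2 * P) * x ^ (-α) = 1 / (2 * (P * x ^ α)) := by
      rw [Real.rpow_neg hx0.le]
      field_simp
    rw [heq]
    exact one_div_le_one_div_of_le (by linarith) (by linarith)
  -- the final arithmetic
  have harith1 : 2 / P * (c ^ (1 - α) * D / (α - 1)) = 2 / (θ ^ 2 * (α - 1)) := by
    rw [show c ^ (1 - α) * D = P / θ ^ 2 by rw [eq_div_iff (by positivity)]; linear_combination hc1]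
    field_simp
  have harith2 : 1 / (2 * P) * (c ^ (1 - α) * D / (α - 1)) = 1 / (2 * θ ^ 2 * (α - 1)) := by
    rw [show c ^ (1 - α) * D = P / θ ^ 2 by rw [eq_div_iff (by positivity)]; linear_combination hc1]
    field_simp
  -- identify the set and compute the integral
  rcases eq_or_ne T ⊤ with hT | hT
  · have hepow : epow T (1 - α) = 0 := by simp [epow, hT]
    have hseq : {x : ℝ | c * S < x ∧ (x : EReal) < ((c : ℝ) : EReal) * T} = Ioi (c * S) := by
      ext x
      simp [hT, EReal.coe_mul_top_of_pos hc]
    rw [hseq]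
    have hval : ∫⁻ x in Ioi (c * S), ENNReal.ofReal (x ^ (-α)) =
        ENNReal.ofReal (c ^ (1 - α) * D / (α - 1)) := by
      rw [lintA α (c * S) hα hcS, Real.mul_rpow hc.le hS.le]
      congr 2
      rw [hDdef, hepow]
      ring
    constructor
    · calc ∫⁻ x in Ioi (c * S), ENNReal.ofReal (1 / ‖ζ - P • axPt α x‖)
          ≤ ∫⁻ x in Ioi (c * S), ENNReal.ofReal (2 / P) * ENNReal.ofReal (x ^ (-α)) :=
            setLIntegral_mono' measurableSet_Ioi (fun x hx => pt1 x hx)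
        _ = ENNReal.ofReal (2 / P) * ∫⁻ x in Ioi (c * S), ENNReal.ofReal (x ^ (-α)) :=
            lintegral_const_mul' _ _ ENNReal.ofReal_ne_top
        _ = ENNReal.ofReal (2 / (θ ^ 2 * (α - 1))) := by
            rw [hval, ← ENNReal.ofReal_mul (by positivity), harith1]
    · calc ENNReal.ofReal (1 / (2 * θ ^ 2 * (α - 1)))
          = ENNReal.ofReal (1 / (2 * P)) * ∫⁻ x in Ioi (c * S), ENNReal.ofReal (x ^ (-α)) := by
            rw [hval, ← ENNReal.ofReal_mul (by positivity), harith2]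
        _ = ∫⁻ x in Ioi (c * S), ENNReal.ofReal (1 / (2 * P)) * ENNReal.ofReal (x ^ (-α)) :=
            (lintegral_const_mul' _ _ ENNReal.ofReal_ne_top).symm
        _ ≤ ∫⁻ x in Ioi (c * S), ENNReal.ofReal (1 / (1 + P * x ^ α)) :=
            setLIntegral_mono' measurableSet_Ioi (fun x hx => pt2 x hx)
  · have hTbot : T ≠ ⊥ := (bot_le.trans_lt hST).ne'
    set t : ℝ := T.toReal with htdef
    have hTt : T = ((t : ℝ) : EReal) := (EReal.coe_toReal hT hTbot).symm
    have hSt : S < t := by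
      rw [hTt] at hST
      exact_mod_cast hST
    have hepow : epow T (1 - α) = t ^ (1 - α) := by simp [epow, hT, htdef]
    have hseq : {x : ℝ | c * S < x ∧ (x : EReal) < ((c : ℝ) : EReal) * T} = Ioo (c * S) (c * t) := by
      ext x
      rw [hTt]
      simp [← EReal.coe_mul, mem_Ioo]
    rw [hseq]
    have hct : c * S < c * t := by nlinarith
    have hval : ∫⁻ x in Ioo (c * S) (c * t), ENNReal.ofReal (x ^ (-α)) =
        ENNReal.ofReal (c ^ (1 - α) * D / (α - 1)) := by
      rw [lintB α (c * S) (c * t) hα hcS hct, Real.mul_rpow hc.le hS.le,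
        Real.mul_rpow hc.le (hS.trans hSt).le]
      congr 2
      rw [hDdef, hepow]
      ring
    constructor
    · calc ∫⁻ x in Ioo (c * S) (c * t), ENNReal.ofReal (1 / ‖ζ - P • axPt α x‖)
          ≤ ∫⁻ x in Ioo (c * S) (c * t), ENNReal.ofReal (2 / P) * ENNReal.ofReal (x ^ (-α)) :=
            setLIntegral_mono' measurableSet_Ioo (fun x hx => pt1 x hx.1)
        _ = ENNReal.ofReal (2 / P) * ∫⁻ x in Ioo (c * S) (c * t), ENNReal.ofReal (x ^ (-α)) :=
            lintegral_const_mul' _ _ ENNReal.ofReal_ne_top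
        _ = ENNReal.ofReal (2 / (θ ^ 2 * (α - 1))) := by
            rw [hval, ← ENNReal.ofReal_mul (by positivity), harith1]
    · calc ENNReal.ofReal (1 / (2 * θ ^ 2 * (α - 1)))
          = ENNReal.ofReal (1 / (2 * P)) *
              ∫⁻ x in Ioo (c * S) (c * t), ENNReal.ofReal (x ^ (-α)) := by
            rw [hval, ← ENNReal.ofReal_mul (by positivity), harith2]
        _ = ∫⁻ x in Ioo (c * S) (c * t),
              ENNReal.ofReal (1 / (2 * P)) * ENNReal.ofReal (x ^ (-α)) :=
            (lintegral_const_mul' _ _ ENNReal.ofReal_ne_top).symm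
        _ ≤ ∫⁻ x in Ioo (c * S) (c * t), ENNReal.ofReal (1 / (1 + P * x ^ α)) :=
            setLIntegral_mono' measurableSet_Ioo (fun x hx => pt2 x hx.1)
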